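/- arXiv:1706.02854 — 4 statements merged into one kernel-verified Lean document; each statement's English description precedes it below -/
import Mathlib

section
/- An ℒ_A□-formula φ is K(A)-valid if and only if φ is valid in every finite serial K(A)-model (i.e., every K(A)-model whose set of worlds is finite and whose accessibility relation is serial). -/
/-- Formulas of the language ℒ_A□ : variables, the constant 0̄, the lattice
connectives ∧ (`and`) and ∨ (`or`), the group connectives & (`conj`) and → (`imp`),
and the modal connective □ (`box`). -/
inductive FormA : Type
  | var  : ℕ → FormA
  | zero : FormA
  | and  : FormA → FormA → FormA
  | or   : FormA → FormA → FormA
  | conj : FormA → FormA → FormA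
  | imp  : FormA → FormA → FormA
  | box  : FormA → FormA

/-- A K(A)-model: a nonempty set of worlds, an accessibility relation, and a
valuation of the variables bounded by some `r ≥ 0`. -/
structure KAModel where
  World : Type
  ne : Nonempty World
  R : World → World → Prop
  V : ℕ → World → ℝ
  r : ℝ
  hr : 0 ≤ r
  hV : ∀ p x, V p x ∈ Set.Icc (-r) r

/-- The valuation extended to all ℒ_A□-formulas.  Note that `sInf ∅ = 0` in `ℝ`,
matching the convention that the infimum of the empty set is `0`. -/
noncomputable def KAModel.val (M : KAModel) : FormA → M.World → ℝ
  | .var p, x => M.V p x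
  | .zero, _ => 0
  | .and φ ψ, x => min (M.val φ x) (M.val ψ x)
  | .or φ ψ, x => max (M.val φ x) (M.val ψ x)
  | .conj φ ψ, x => M.val φ x + M.val ψ x
  | .imp φ ψ, x => M.val ψ x - M.val φ x
  | .box φ, x => sInf {v : ℝ | ∃ y, M.R x y ∧ M.val φ y = v}

/-- Validity of a formula in a model. -/
def KAModel.ValidIn (M : KAModel) (φ : FormA) : Prop := ∀ x : M.World, 0 ≤ M.val φ x

/-- K(A)-validity. -/
def KAValid (φ : FormA) : Prop := ∀ M : KAModel, M.ValidIn φ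

def fdepth : FormA → ℕ
  | .var _ => 0
  | .zero => 0
  | .and a b => max (fdepth a) (fdepth b)
  | .or a b => max (fdepth a) (fdepth b)
  | .conj a b => max (fdepth a) (fdepth b)
  | .imp a b => max (fdepth a) (fdepth b)
  | .box a => fdepth a + 1

def fweight : FormA → ℕ
  | .var _ => 0
  | .zero => 0
  | .and a b => max (fweight a) (fweight b)
  | .or a b => max (fweight a) (fweight b)
  | .conj a b => fweight a + fweight b
  | .imp a b => fweight a + fweight b
  | .box a => fweight a + 1

def fsubs : FormA → List FormA
  | .var p => [.var p]
  | .zero => [.zero]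
  | .and a b => .and a b :: (fsubs a ++ fsubs b)
  | .or a b => .or a b :: (fsubs a ++ fsubs b)
  | .conj a b => .conj a b :: (fsubs a ++ fsubs b)
  | .imp a b => .imp a b :: (fsubs a ++ fsubs b)
  | .box a => .box a :: fsubs a

lemma mem_fsubs_self (χ : FormA) : χ ∈ fsubs χ := by
  cases χ <;> simp [fsubs]

lemma fsubs_subset : ∀ φ χ : FormA, χ ∈ fsubs φ → fsubs χ ⊆ fsubs φ := by
  intro φ
  induction φ with
  | var p => intro χ h; simp [fsubs] at h; subst h; exact fun x hx => hx
  | zero => intro χ h; simp [fsubs] at h; subst h; exact fun x hx => hx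
  | and a b iha ihb =>
    intro χ h; simp only [fsubs, List.mem_cons, List.mem_append] at h
    rcases h with h | h | h
    · subst h; exact fun x hx => hx
    · intro x hx; simp only [fsubs, List.mem_cons, List.mem_append]
      exact Or.inr (Or.inl (iha χ h hx))
    · intro x hx; simp only [fsubs, List.mem_cons, List.mem_append]
      exact Or.inr (Or.inr (ihb χ h hx))
  | or a b iha ihb =>
    intro χ h; simp only [fsubs, List.mem_cons, List.mem_append] at h
    rcases h with h | h | h
    · subst h; exact fun x hx => hx
    · intro x hx; simp only [fsubs, List.mem_cons, List.mem_append]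
      exact Or.inr (Or.inl (iha χ h hx))
    · intro x hx; simp only [fsubs, List.mem_cons, List.mem_append]
      exact Or.inr (Or.inr (ihb χ h hx))
  | conj a b iha ihb =>
    intro χ h; simp only [fsubs, List.mem_cons, List.mem_append] at h
    rcases h with h | h | h
    · subst h; exact fun x hx => hx
    · intro x hx; simp only [fsubs, List.mem_cons, List.mem_append]
      exact Or.inr (Or.inl (iha χ h hx))
    · intro x hx; simp only [fsubs, List.mem_cons, List.mem_append]
      exact Or.inr (Or.inr (ihb χ h hx))
  | imp a b iha ihb =>
    intro χ h; simp only [fsubs, List.mem_cons, List.mem_append] at h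
    rcases h with h | h | h
    · subst h; exact fun x hx => hx
    · intro x hx; simp only [fsubs, List.mem_cons, List.mem_append]
      exact Or.inr (Or.inl (iha χ h hx))
    · intro x hx; simp only [fsubs, List.mem_cons, List.mem_append]
      exact Or.inr (Or.inr (ihb χ h hx))
  | box a iha =>
    intro χ h; simp only [fsubs, List.mem_cons] at h
    rcases h with h | h
    · subst h; exact fun x hx => hx
    · intro x hx; simp only [fsubs, List.mem_cons]
      exact Or.inr (iha χ h hx)

noncomputable def fbound (r : ℝ) : FormA → ℝ
  | .var _ => r
  | .zero => 0
  | .and a b => max (fbound r a) (fbound r b)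
  | .or a b => max (fbound r a) (fbound r b)
  | .conj a b => fbound r a + fbound r b
  | .imp a b => fbound r a + fbound r b
  | .box a => fbound r a

lemma fbound_nonneg {r : ℝ} (hr : 0 ≤ r) : ∀ χ, 0 ≤ fbound r χ := by
  intro χ
  induction χ with
  | var p => exact hr
  | zero => exact le_refl 0
  | and a b iha ihb => exact le_max_of_le_left iha
  | or a b iha ihb => exact le_max_of_le_left iha
  | conj a b iha ihb => exact add_nonneg iha ihb
  | imp a b iha ihb => exact add_nonneg iha ihb
  | box a iha => exact iha

lemma abs_val_le (M : KAModel) : ∀ (χ : FormA) (x : M.World), |M.val χ x| ≤ fbound M.r χ := by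
  intro χ
  induction χ with
  | var p =>
    intro x
    have := M.hV p x
    rw [Set.mem_Icc] at this
    rw [abs_le]; exact ⟨this.1, this.2⟩
  | zero => intro x; simp [KAModel.val, fbound]
  | and a b iha ihb =>
    intro x
    have h1 := (abs_le.mp (iha x)); have h2 := (abs_le.mp (ihb x))
    simp only [KAModel.val, fbound]
    rw [abs_le]
    constructor
    · apply le_min
      · exact le_trans (neg_le_neg (le_max_left _ _)) h1.1
      · exact le_trans (neg_le_neg (le_max_right _ _)) h2.1
    · exact le_trans (min_le_left _ _) (h1.2.trans (le_max_left _ _))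
  | or a b iha ihb =>
    intro x
    have h1 := (abs_le.mp (iha x)); have h2 := (abs_le.mp (ihb x))
    simp only [KAModel.val, fbound]
    rw [abs_le]
    constructor
    · exact le_trans (le_trans (neg_le_neg (le_max_left _ _)) h1.1) (le_max_left _ _)
    · apply max_le
      · exact h1.2.trans (le_max_left _ _)
      · exact h2.2.trans (le_max_right _ _)
  | conj a b iha ihb =>
    intro x
    simp only [KAModel.val, fbound]
    exact (abs_add_le _ _).trans (add_le_add (iha x) (ihb x))
  | imp a b iha ihb =>
    intro x
    simp only [KAModel.val, fbound]
    have := (abs_sub _ _ : |M.val b x - M.val a x| ≤ |M.val b x| + |M.val a x|)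
    have h1 := iha x; have h2 := ihb x
    linarith
  | box a iha =>
    intro x
    simp only [KAModel.val, fbound]
    set T := {v : ℝ | ∃ y, M.R x y ∧ M.val a y = v} with hT
    by_cases hne : T.Nonempty
    · rw [abs_le]
      constructor
      · apply le_csInf hne
        rintro v ⟨y, _, rfl⟩
        exact (abs_le.mp (iha y)).1
      · obtain ⟨v, hv⟩ := hne
        refine le_trans (csInf_le ⟨-fbound M.r a, ?_⟩ hv) ?_
        · rintro w ⟨y, _, rfl⟩
          exact (abs_le.mp (iha y)).1
        · obtain ⟨y, _, rfl⟩ := hv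
          exact (abs_le.mp (iha y)).2
    · rw [Set.not_nonempty_iff_eq_empty] at hne
      rw [hne, Real.sInf_empty, abs_zero]
      exact fbound_nonneg M.hr a

attribute [local instance] Classical.propDecidable
lemma bddBelow_valSet (M : KAModel) (χ : FormA) (x : M.World) :
    BddBelow {v : ℝ | ∃ y, M.R x y ∧ M.val χ y = v} := by
  refine ⟨-fbound M.r χ, ?_⟩
  rintro v ⟨y, _, rfl⟩
  exact (abs_le.mp (abs_val_le M χ y)).1

lemma exists_approx (M : KAModel) (ψ : FormA) (y : M.World) (h : ∃ z, M.R y z)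
    {ε : ℝ} (hε : 0 < ε) :
    ∃ z, M.R y z ∧ M.val ψ z < M.val (.box ψ) y + ε := by
  have hne : {v : ℝ | ∃ w, M.R y w ∧ M.val ψ w = v}.Nonempty :=
    ⟨M.val ψ h.choose, h.choose, h.choose_spec, rfl⟩
  have hval : M.val (.box ψ) y = sInf {v : ℝ | ∃ w, M.R y w ∧ M.val ψ w = v} := rfl
  obtain ⟨v, hvT, hlt⟩ := exists_lt_of_csInf_lt hne
    (lt_add_of_pos_right (sInf {v : ℝ | ∃ w, M.R y w ∧ M.val ψ w = v}) hε)
  obtain ⟨z, hz, rfl⟩ := hvT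
  exact ⟨z, hz, by rw [hval]; exact hlt⟩

def funbox : FormA → FormA
  | .box a => a
  | χ => χ

noncomputable def fstep (M : KAModel) {ε : ℝ} (hε : 0 < ε) (S : List FormA)
    (j : ℕ) (y : M.World) : M.World :=
  if h : ∃ z, M.R y z then (exists_approx M (funbox (S.getD j .zero)) y h hε).choose else y

lemma fstep_rel (M : KAModel) {ε : ℝ} (hε : 0 < ε) (S : List FormA) (j : ℕ) (y : M.World)
    (h : ∃ z, M.R y z) :
    M.R y (fstep M hε S j y) ∧
      M.val (funbox (S.getD j .zero)) (fstep M hε S j y) <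
        M.val (.box (funbox (S.getD j .zero))) y + ε := by
  rw [fstep, dif_pos h]
  exact (exists_approx M (funbox (S.getD j .zero)) y h hε).choose_spec

noncomputable def fdecode (M : KAModel) {ε : ℝ} (hε : 0 < ε) (S : List FormA) (x0 : M.World) :
    ℕ → (ℕ → ℕ) → M.World
  | 0, _ => x0
  | k+1, f => fstep M hε S (f k) (fdecode M hε S x0 k f)

lemma fdecode_congr (M : KAModel) {ε : ℝ} (hε : 0 < ε) (S : List FormA) (x0 : M.World) :
    ∀ (k : ℕ) (f g : ℕ → ℕ), (∀ i < k, f i = g i) →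
      fdecode M hε S x0 k f = fdecode M hε S x0 k g := by
  intro k
  induction k with
  | zero => intro f g _; rfl
  | succ k ih =>
    intro f g hfg
    show fstep M hε S (f k) _ = fstep M hε S (g k) _
    rw [hfg k (Nat.lt_succ_self k), ih f g (fun i hi => hfg i (hi.trans (Nat.lt_succ_self k)))]

def liftF {d n : ℕ} (f : Fin d → Fin n) : ℕ → ℕ :=
  fun i => if h : i < d then (f ⟨i, h⟩ : ℕ) else 0

abbrev FW (φ : FormA) : Type :=
  Option (Fin (fdepth φ + 1) × (Fin (fdepth φ) → Fin ((fsubs φ).length + 1)))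

def fcond (M : KAModel) {ε : ℝ} (hε : 0 < ε) (φ : FormA) (x0 : M.World)
    (k : Fin (fdepth φ + 1)) (f : Fin (fdepth φ) → Fin ((fsubs φ).length + 1)) : Prop :=
  (k : ℕ) < fdepth φ ∧ ∃ z, M.R (fdecode M hε (fsubs φ) x0 (k : ℕ) (liftF f)) z

def finR (M : KAModel) {ε : ℝ} (hε : 0 < ε) (φ : FormA) (x0 : M.World) :
    FW φ → FW φ → Prop
  | none, w' => w' = none
  | some (k, f), w' =>
      (fcond M hε φ x0 k f ∧
        ∃ (k' : Fin (fdepth φ + 1)) (g : Fin (fdepth φ) → Fin ((fsubs φ).length + 1)),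
          w' = some (k', g) ∧ (k' : ℕ) = (k : ℕ) + 1 ∧
          ∀ i : Fin (fdepth φ), (i : ℕ) < (k : ℕ) → g i = f i)
      ∨ (¬ fcond M hε φ x0 k f ∧ w' = none)

noncomputable def finModel (M : KAModel) {ε : ℝ} (hε : 0 < ε) (φ : FormA) (x0 : M.World) :
    KAModel where
  World := FW φ
  ne := ⟨none⟩
  R := finR M hε φ x0
  V := fun p w =>
    match w with
    | none => 0
    | some (k, f) => M.V p (fdecode M hε (fsubs φ) x0 (k : ℕ) (liftF f))
  r := M.r
  hr := M.hr
  hV := fun p w => by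
    cases w with
    | none =>
      rw [Set.mem_Icc]
      constructor
      · simpa using M.hr
      · exact M.hr
    | some kf => exact M.hV p _

lemma finModel_val_none (M : KAModel) {ε : ℝ} (hε : 0 < ε) (φ : FormA) (x0 : M.World) :
    ∀ χ : FormA, (finModel M hε φ x0).val χ (none : FW φ) = 0 := by
  intro χ
  induction χ with
  | var p => rfl
  | zero => rfl
  | and a b iha ihb => show min _ _ = 0; rw [iha, ihb]; simp
  | or a b iha ihb => show max _ _ = 0; rw [iha, ihb]; simp
  | conj a b iha ihb => show _ + _ = 0; rw [iha, ihb]; simp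
  | imp a b iha ihb => show _ - _ = 0; rw [iha, ihb]; simp
  | box a iha =>
    show sInf {v : ℝ | ∃ y, (finModel M hε φ x0).R none y ∧ (finModel M hε φ x0).val a y = v} = 0
    have : {v : ℝ | ∃ y, (finModel M hε φ x0).R none y ∧ (finModel M hε φ x0).val a y = v}
        = {(0 : ℝ)} := by
      ext v
      constructor
      · rintro ⟨y, hy, rfl⟩
        have : y = none := hy
        rw [this, iha]; rfl
      · rintro rfl
        exact ⟨none, rfl, iha⟩
    rw [this, csInf_singleton]

lemma main_est (M : KAModel) {ε : ℝ} (hε : 0 < ε) (φ : FormA) (x0 : M.World) :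
    ∀ χ : FormA, χ ∈ fsubs φ →
      ∀ (k : Fin (fdepth φ + 1)) (f : Fin (fdepth φ) → Fin ((fsubs φ).length + 1)),
        fdepth χ + (k : ℕ) ≤ fdepth φ →
        |(finModel M hε φ x0).val χ (some (k, f)) -
          M.val χ (fdecode M hε (fsubs φ) x0 (k : ℕ) (liftF f))| ≤ (fweight χ : ℝ) * ε := by
  intro χ
  induction χ with
  | var p =>
    intro _ k f _
    have h1 : (finModel M hε φ x0).val (.var p) (some (k, f)) =
        M.V p (fdecode M hε (fsubs φ) x0 (k : ℕ) (liftF f)) := rfl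
    have h2 : M.val (.var p) (fdecode M hε (fsubs φ) x0 (k : ℕ) (liftF f)) =
        M.V p (fdecode M hε (fsubs φ) x0 (k : ℕ) (liftF f)) := rfl
    rw [h1, h2, sub_self, abs_zero]
    positivity
  | zero =>
    intro _ k f _
    have h1 : (finModel M hε φ x0).val .zero (some (k, f)) = 0 := rfl
    have h2 : M.val .zero (fdecode M hε (fsubs φ) x0 (k : ℕ) (liftF f)) = 0 := rfl
    rw [h1, h2, sub_self, abs_zero]
    positivity
  | and a b iha ihb =>
    intro hmem k f hdep
    have hma : a ∈ fsubs φ := fsubs_subset φ _ hmem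
      (by simp only [fsubs, List.mem_cons, List.mem_append]
          exact Or.inr (Or.inl (mem_fsubs_self a)))
    have hmb : b ∈ fsubs φ := fsubs_subset φ _ hmem
      (by simp only [fsubs, List.mem_cons, List.mem_append]
          exact Or.inr (Or.inr (mem_fsubs_self b)))
    have hda : fdepth a + (k : ℕ) ≤ fdepth φ :=
      le_trans (Nat.add_le_add_right (le_max_left (fdepth a) (fdepth b)) _) hdep
    have hdb : fdepth b + (k : ℕ) ≤ fdepth φ :=
      le_trans (Nat.add_le_add_right (le_max_right (fdepth a) (fdepth b)) _) hdep
    have iha' := iha hma k f hda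
    have ihb' := ihb hmb k f hdb
    have e1 : (finModel M hε φ x0).val (.and a b) (some (k, f)) =
        min ((finModel M hε φ x0).val a (some (k, f)))
          ((finModel M hε φ x0).val b (some (k, f))) := rfl
    have e2 : M.val (.and a b) (fdecode M hε (fsubs φ) x0 (k : ℕ) (liftF f)) =
        min (M.val a (fdecode M hε (fsubs φ) x0 (k : ℕ) (liftF f)))
          (M.val b (fdecode M hε (fsubs φ) x0 (k : ℕ) (liftF f))) := rfl
    rw [e1, e2]
    refine le_trans (abs_min_sub_min_le_max _ _ _ _) ?_
    have hcast : (fweight (.and a b) : ℝ) * ε =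
        max ((fweight a : ℝ) * ε) ((fweight b : ℝ) * ε) := by
      rw [show fweight (.and a b) = max (fweight a) (fweight b) from rfl, Nat.cast_max,
        max_mul_of_nonneg _ _ hε.le]
    rw [hcast]
    exact max_le_max iha' ihb'
  | or a b iha ihb =>
    intro hmem k f hdep
    have hma : a ∈ fsubs φ := fsubs_subset φ _ hmem
      (by simp only [fsubs, List.mem_cons, List.mem_append]
          exact Or.inr (Or.inl (mem_fsubs_self a)))
    have hmb : b ∈ fsubs φ := fsubs_subset φ _ hmem
      (by simp only [fsubs, List.mem_cons, List.mem_append]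
          exact Or.inr (Or.inr (mem_fsubs_self b)))
    have hda : fdepth a + (k : ℕ) ≤ fdepth φ :=
      le_trans (Nat.add_le_add_right (le_max_left (fdepth a) (fdepth b)) _) hdep
    have hdb : fdepth b + (k : ℕ) ≤ fdepth φ :=
      le_trans (Nat.add_le_add_right (le_max_right (fdepth a) (fdepth b)) _) hdep
    have iha' := iha hma k f hda
    have ihb' := ihb hmb k f hdb
    have e1 : (finModel M hε φ x0).val (.or a b) (some (k, f)) =
        max ((finModel M hε φ x0).val a (some (k, f)))
          ((finModel M hε φ x0).val b (some (k, f))) := rfl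
    have e2 : M.val (.or a b) (fdecode M hε (fsubs φ) x0 (k : ℕ) (liftF f)) =
        max (M.val a (fdecode M hε (fsubs φ) x0 (k : ℕ) (liftF f)))
          (M.val b (fdecode M hε (fsubs φ) x0 (k : ℕ) (liftF f))) := rfl
    rw [e1, e2]
    refine le_trans (abs_max_sub_max_le_max _ _ _ _) ?_
    have hcast : (fweight (.or a b) : ℝ) * ε =
        max ((fweight a : ℝ) * ε) ((fweight b : ℝ) * ε) := by
      rw [show fweight (.or a b) = max (fweight a) (fweight b) from rfl, Nat.cast_max,
        max_mul_of_nonneg _ _ hε.le]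
    rw [hcast]
    exact max_le_max iha' ihb'
  | conj a b iha ihb =>
    intro hmem k f hdep
    have hma : a ∈ fsubs φ := fsubs_subset φ _ hmem
      (by simp only [fsubs, List.mem_cons, List.mem_append]
          exact Or.inr (Or.inl (mem_fsubs_self a)))
    have hmb : b ∈ fsubs φ := fsubs_subset φ _ hmem
      (by simp only [fsubs, List.mem_cons, List.mem_append]
          exact Or.inr (Or.inr (mem_fsubs_self b)))
    have hda : fdepth a + (k : ℕ) ≤ fdepth φ :=
      le_trans (Nat.add_le_add_right (le_max_left (fdepth a) (fdepth b)) _) hdep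
    have hdb : fdepth b + (k : ℕ) ≤ fdepth φ :=
      le_trans (Nat.add_le_add_right (le_max_right (fdepth a) (fdepth b)) _) hdep
    have iha' := iha hma k f hda
    have ihb' := ihb hmb k f hdb
    have e1 : (finModel M hε φ x0).val (.conj a b) (some (k, f)) =
        (finModel M hε φ x0).val a (some (k, f)) +
          (finModel M hε φ x0).val b (some (k, f)) := rfl
    have e2 : M.val (.conj a b) (fdecode M hε (fsubs φ) x0 (k : ℕ) (liftF f)) =
        M.val a (fdecode M hε (fsubs φ) x0 (k : ℕ) (liftF f)) +
          M.val b (fdecode M hε (fsubs φ) x0 (k : ℕ) (liftF f)) := rfl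
    rw [e1, e2]
    have hre : (finModel M hε φ x0).val a (some (k, f)) +
          (finModel M hε φ x0).val b (some (k, f)) -
        (M.val a (fdecode M hε (fsubs φ) x0 (k : ℕ) (liftF f)) +
          M.val b (fdecode M hε (fsubs φ) x0 (k : ℕ) (liftF f))) =
        ((finModel M hε φ x0).val a (some (k, f)) -
          M.val a (fdecode M hε (fsubs φ) x0 (k : ℕ) (liftF f))) +
        ((finModel M hε φ x0).val b (some (k, f)) -
          M.val b (fdecode M hε (fsubs φ) x0 (k : ℕ) (liftF f))) := by ring
    rw [hre]
    refine le_trans (abs_add_le _ _) ?_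
    have hcast : (fweight (.conj a b) : ℝ) = (fweight a : ℝ) + (fweight b : ℝ) := by
      rw [show fweight (.conj a b) = fweight a + fweight b from rfl]; push_cast; ring
    rw [hcast]
    nlinarith [iha', ihb']
  | imp a b iha ihb =>
    intro hmem k f hdep
    have hma : a ∈ fsubs φ := fsubs_subset φ _ hmem
      (by simp only [fsubs, List.mem_cons, List.mem_append]
          exact Or.inr (Or.inl (mem_fsubs_self a)))
    have hmb : b ∈ fsubs φ := fsubs_subset φ _ hmem
      (by simp only [fsubs, List.mem_cons, List.mem_append]
          exact Or.inr (Or.inr (mem_fsubs_self b)))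
    have hda : fdepth a + (k : ℕ) ≤ fdepth φ :=
      le_trans (Nat.add_le_add_right (le_max_left (fdepth a) (fdepth b)) _) hdep
    have hdb : fdepth b + (k : ℕ) ≤ fdepth φ :=
      le_trans (Nat.add_le_add_right (le_max_right (fdepth a) (fdepth b)) _) hdep
    have iha' := iha hma k f hda
    have ihb' := ihb hmb k f hdb
    have e1 : (finModel M hε φ x0).val (.imp a b) (some (k, f)) =
        (finModel M hε φ x0).val b (some (k, f)) -
          (finModel M hε φ x0).val a (some (k, f)) := rfl
    have e2 : M.val (.imp a b) (fdecode M hε (fsubs φ) x0 (k : ℕ) (liftF f)) =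
        M.val b (fdecode M hε (fsubs φ) x0 (k : ℕ) (liftF f)) -
          M.val a (fdecode M hε (fsubs φ) x0 (k : ℕ) (liftF f)) := rfl
    rw [e1, e2]
    have hre : (finModel M hε φ x0).val b (some (k, f)) -
          (finModel M hε φ x0).val a (some (k, f)) -
        (M.val b (fdecode M hε (fsubs φ) x0 (k : ℕ) (liftF f)) -
          M.val a (fdecode M hε (fsubs φ) x0 (k : ℕ) (liftF f))) =
        ((finModel M hε φ x0).val b (some (k, f)) -
          M.val b (fdecode M hε (fsubs φ) x0 (k : ℕ) (liftF f))) -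
        ((finModel M hε φ x0).val a (some (k, f)) -
          M.val a (fdecode M hε (fsubs φ) x0 (k : ℕ) (liftF f))) := by ring
    rw [hre]
    refine le_trans (abs_sub _ _) ?_
    have hcast : (fweight (.imp a b) : ℝ) = (fweight a : ℝ) + (fweight b : ℝ) := by
      rw [show fweight (.imp a b) = fweight a + fweight b from rfl]; push_cast; ring
    rw [hcast]
    nlinarith [iha', ihb']
  | box a iha =>
    intro hmem k f hdep
    have hma : a ∈ fsubs φ := fsubs_subset φ _ hmem
      (by simp only [fsubs, List.mem_cons]; exact Or.inr (mem_fsubs_self a))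
    have hdep2 : fdepth a + 1 + (k : ℕ) ≤ fdepth φ := hdep
    have hkd : (k : ℕ) < fdepth φ := by omega
    have hk1 : (k : ℕ) + 1 < fdepth φ + 1 := by omega
    have hdep' : fdepth a + ((k : ℕ) + 1) ≤ fdepth φ := by omega
    set y := fdecode M hε (fsubs φ) x0 (k : ℕ) (liftF f) with hy
    have eN : (finModel M hε φ x0).val (.box a) (some (k, f)) =
        sInf {v : ℝ | ∃ w, (finModel M hε φ x0).R (some (k, f)) w ∧
          (finModel M hε φ x0).val a w = v} := rfl
    have eM : M.val (.box a) y = sInf {v : ℝ | ∃ z, M.R y z ∧ M.val a z = v} := rfl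
    set T' := {v : ℝ | ∃ w, (finModel M hε φ x0).R (some (k, f)) w ∧
      (finModel M hε φ x0).val a w = v} with hT'
    set T := {v : ℝ | ∃ z, M.R y z ∧ M.val a z = v} with hT
    have hbddT' : BddBelow T' := by
      rw [hT']; exact bddBelow_valSet (finModel M hε φ x0) a (some (k, f))
    have hbddT : BddBelow T := by rw [hT]; exact bddBelow_valSet M a y
    have hwcast : (fweight (.box a) : ℝ) = (fweight a : ℝ) + 1 := by
      rw [show fweight (.box a) = fweight a + 1 from rfl]; push_cast; ring
    by_cases hc : ∃ z, M.R y z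
    · -- the current world has successors in M
      have hcond : fcond M hε φ x0 k f := ⟨hkd, hc⟩
      have hsuccs : ∀ w, (finModel M hε φ x0).R (some (k, f)) w ↔
          ∃ g, (∀ i : Fin (fdepth φ), (i : ℕ) < (k : ℕ) → g i = f i) ∧
            w = some (⟨(k : ℕ) + 1, hk1⟩, g) := by
        intro w
        show finR M hε φ x0 (some (k, f)) w ↔ _
        constructor
        · rintro (⟨_, k', g, rfl, hk', hg⟩ | ⟨hnc, _⟩)
          · exact ⟨g, hg, by rw [show k' = ⟨(k : ℕ) + 1, hk1⟩ from Fin.ext hk']⟩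
          · exact absurd hcond hnc
        · rintro ⟨g, hg, rfl⟩
          exact Or.inl ⟨hcond, ⟨(k : ℕ) + 1, hk1⟩, g, rfl, rfl, hg⟩
      have hdec : ∀ g : Fin (fdepth φ) → Fin ((fsubs φ).length + 1),
          (∀ i : Fin (fdepth φ), (i : ℕ) < (k : ℕ) → g i = f i) →
          fdecode M hε (fsubs φ) x0 ((k : ℕ) + 1) (liftF g) =
            fstep M hε (fsubs φ) (liftF g (k : ℕ)) y := by
        intro g hg
        show fstep M hε (fsubs φ) (liftF g (k : ℕ))
          (fdecode M hε (fsubs φ) x0 (k : ℕ) (liftF g)) = _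
        congr 1
        rw [hy]
        apply fdecode_congr
        intro i hi
        have hid : i < fdepth φ := lt_trans hi hkd
        rw [liftF, liftF]
        simp only [dif_pos hid]
        rw [hg ⟨i, hid⟩ hi]
      -- lower bound
      have hne' : T'.Nonempty := by
        refine ⟨(finModel M hε φ x0).val a (some (⟨(k : ℕ) + 1, hk1⟩, f)), ?_⟩
        rw [hT']
        exact ⟨some (⟨(k : ℕ) + 1, hk1⟩, f), (hsuccs _).mpr ⟨f, fun _ _ => rfl, rfl⟩, rfl⟩
      have hlow : ∀ v ∈ T', sInf T - (fweight a : ℝ) * ε ≤ v := by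
        intro v hv
        rw [hT'] at hv
        obtain ⟨w, hw, rfl⟩ := hv
        obtain ⟨g, hg, rfl⟩ := (hsuccs w).mp hw
        have hIH : |(finModel M hε φ x0).val a (some (⟨(k : ℕ) + 1, hk1⟩, g)) -
            M.val a (fdecode M hε (fsubs φ) x0 ((k : ℕ) + 1) (liftF g))| ≤
            (fweight a : ℝ) * ε := iha hma ⟨(k : ℕ) + 1, hk1⟩ g (by exact hdep')
        have hmemT : M.val a (fdecode M hε (fsubs φ) x0 ((k : ℕ) + 1) (liftF g)) ∈ T := by
          rw [hdec g hg, hT]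
          exact ⟨_, (fstep_rel M hε (fsubs φ) (liftF g (k : ℕ)) y hc).1, rfl⟩
        have h1 : sInf T ≤ M.val a (fdecode M hε (fsubs φ) x0 ((k : ℕ) + 1) (liftF g)) :=
          csInf_le hbddT hmemT
        have h2 := (abs_le.mp hIH).1
        linarith
      have hlowInf : sInf T - (fweight a : ℝ) * ε ≤ sInf T' := le_csInf hne' hlow
      -- upper bound
      obtain ⟨i, hi, hgeti⟩ := List.mem_iff_getElem.mp hmem
      have hgetD : (fsubs φ).getD i .zero = .box a := by
        rw [List.getD_eq_getElem _ _ hi]; exact hgeti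
      have hjlt : i < (fsubs φ).length + 1 := by omega
      set g' := Function.update f ⟨(k : ℕ), hkd⟩ (⟨i, hjlt⟩ : Fin ((fsubs φ).length + 1))
        with hg'
      have hg'agree : ∀ i' : Fin (fdepth φ), (i' : ℕ) < (k : ℕ) → g' i' = f i' := by
        intro i' hi'
        rw [hg', Function.update_of_ne (Fin.ne_of_val_ne (by exact Nat.ne_of_lt hi'))]
      have hliftk : liftF g' (k : ℕ) = i := by
        rw [liftF]
        simp only [dif_pos hkd]
        rw [hg', Function.update_self]
      have hstep := fstep_rel M hε (fsubs φ) i y hc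
      rw [hgetD] at hstep
      have hfb : funbox (.box a) = a := rfl
      rw [hfb] at hstep
      have hdecg' : fdecode M hε (fsubs φ) x0 ((k : ℕ) + 1) (liftF g') =
          fstep M hε (fsubs φ) i y := by
        rw [hdec g' hg'agree, hliftk]
      have hIHg' : |(finModel M hε φ x0).val a (some (⟨(k : ℕ) + 1, hk1⟩, g')) -
          M.val a (fdecode M hε (fsubs φ) x0 ((k : ℕ) + 1) (liftF g'))| ≤
          (fweight a : ℝ) * ε := iha hma ⟨(k : ℕ) + 1, hk1⟩ g' (by exact hdep')
      have hupper : sInf T' ≤ (finModel M hε φ x0).val a (some (⟨(k : ℕ) + 1, hk1⟩, g')) := by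
        refine csInf_le hbddT' ?_
        rw [hT']
        exact ⟨some (⟨(k : ℕ) + 1, hk1⟩, g'), (hsuccs _).mpr ⟨g', hg'agree, rfl⟩, rfl⟩
      have h2 := (abs_le.mp hIHg').2
      have h3 : M.val a (fstep M hε (fsubs φ) i y) < sInf T + ε := by
        have := hstep.2
        rw [eM] at this
        exact this
      rw [hdecg'] at h2
      rw [eN, eM, hwcast, abs_le]
      constructor <;> nlinarith [hlowInf, hupper, h2, h3, hε.le]
    · -- no successors in M: only the sink is accessible
      have hnc : ¬ fcond M hε φ x0 k f := fun h => hc h.2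
      have hsucc0 : ∀ w, (finModel M hε φ x0).R (some (k, f)) w ↔ w = none := by
        intro w
        show finR M hε φ x0 (some (k, f)) w ↔ _
        constructor
        · rintro (⟨hcond, _⟩ | ⟨_, h⟩)
          · exact absurd hcond hnc
          · exact h
        · rintro rfl
          exact Or.inr ⟨hnc, rfl⟩
      have hT'eq : T' = {(0 : ℝ)} := by
        rw [hT']
        ext v
        simp only [Set.mem_setOf_eq, Set.mem_singleton_iff]
        constructor
        · rintro ⟨w, hw, rfl⟩
          rw [(hsucc0 w).mp hw, finModel_val_none]
        · rintro rfl
          exact ⟨none, (hsucc0 none).mpr rfl, finModel_val_none M hε φ x0 a⟩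
      have hTeq : T = ∅ := by
        rw [hT]
        ext v
        simp only [Set.mem_setOf_eq, Set.mem_empty_iff_false, iff_false, not_exists]
        rintro z ⟨hz, _⟩
        exact hc ⟨z, hz⟩
      rw [eN, eM, hT'eq, hTeq, csInf_singleton, Real.sInf_empty, sub_zero, abs_zero]
      positivity

/-- An ℒ_A□-formula φ is K(A)-valid if and only if φ is valid in every
finite serial K(A)-model. -/
theorem stmt_0 (φ : FormA) :
    KAValid φ ↔
      ∀ M : KAModel, Finite M.World → (∀ x : M.World, ∃ y, M.R x y) → M.ValidIn φ := by
  constructor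
  · intro h M _ _
    exact h M
  · intro h M
    by_contra hnv
    rw [KAModel.ValidIn] at hnv
    push_neg at hnv
    obtain ⟨x, hx⟩ := hnv
    set v := M.val φ x with hv
    set W : ℝ := (fweight φ : ℝ) with hW
    have hW0 : 0 ≤ W := Nat.cast_nonneg _
    have hε : 0 < -v / (W + 1) := div_pos (by linarith) (by linarith)
    set N := finModel M hε φ x with hN
    have hfin : Finite N.World := by
      show Finite (FW φ)
      infer_instance
    have hser : ∀ w : N.World, ∃ w', N.R w w' := by
      intro w
      show ∃ w' : FW φ, finR M hε φ x w w'
      match w with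
      | none => exact ⟨none, rfl⟩
      | some (k, f) =>
        by_cases hc : fcond M hε φ x k f
        · have hkd := hc.1
          exact ⟨some (⟨(k : ℕ) + 1, by omega⟩, f),
            Or.inl ⟨hc, ⟨(k : ℕ) + 1, by omega⟩, f, rfl, rfl, fun _ _ => rfl⟩⟩
        · exact ⟨none, Or.inr ⟨hc, rfl⟩⟩
    have h0 := h N hfin hser (some (⟨0, by omega⟩, fun _ => 0))
    have hd0 : fdepth φ + ((⟨0, by omega⟩ : Fin (fdepth φ + 1)) : ℕ) ≤ fdepth φ := by
      simp
    have hest := main_est M hε φ x φ (mem_fsubs_self φ) ⟨0, by omega⟩ (fun _ => 0) hd0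
    have hdec0 : fdecode M hε (fsubs φ) x
        ((⟨0, by omega⟩ : Fin (fdepth φ + 1)) : ℕ)
        (liftF (fun _ : Fin (fdepth φ) => (0 : Fin ((fsubs φ).length + 1)))) = x := rfl
    rw [hdec0] at hest
    rw [← hv, ← hW] at hest
    have h2 := (abs_le.mp hest).2
    -- N.val φ (root) ≤ v + W * ε while 0 ≤ N.val φ (root)
    have key : (0 : ℝ) ≤ v + W * (-v / (W + 1)) := by
      have h0' : (0:ℝ) ≤ (finModel M hε φ x).val φ (some (⟨0, by omega⟩, fun _ => 0)) := h0
      linarith [h2, h0']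
    have h1 : (0:ℝ) < W + 1 := by linarith
    have hexp : v + W * (-v / (W + 1)) = v / (W + 1) := by
      field_simp
      ring
    rw [hexp, le_div_iff₀ h1] at key
    linarith
end

section
/- For every ℒ_Ł□-formula φ: φ is K(Ł)-valid if and only if its translation φ* is K(A^c)-valid. -/
/-- Formulas of the language ℒ_Ł□ : variables, ∼ (`neg`), ⊃ (`limp`) and □ (`box`). -/
inductive FormL : Type
  | var  : ℕ → FormL
  | neg  : FormL → FormL
  | limp : FormL → FormL → FormL
  | box  : FormL → FormL

/-- A K(Ł)-model: a nonempty set of worlds, an accessibility relation, and a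
valuation of the variables into [0,1]. -/
structure KLModel where
  World : Type
  ne : Nonempty World
  R : World → World → Prop
  V : ℕ → World → ℝ
  hV : ∀ p x, V p x ∈ Set.Icc (0 : ℝ) 1

/-- The valuation extended to all ℒ_Ł□-formulas.  The box is interpreted by the
infimum taken in [0,1]: since all values lie in [0,1], inserting `1` into the set
yields exactly this infimum (in particular the infimum of the empty set is 1). -/
noncomputable def KLModel.val (M : KLModel) : FormL → M.World → ℝ
  | .var p, x => M.V p x
  | .neg φ, x => 1 - M.val φ x
  | .limp φ ψ, x => min 1 (1 - M.val φ x + M.val ψ x)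
  | .box φ, x => sInf (insert 1 {v : ℝ | ∃ y, M.R x y ∧ M.val φ y = v})

/-- K(Ł)-validity: value 1 at every world of every K(Ł)-model. -/
def KLValid (φ : FormL) : Prop := ∀ (M : KLModel) (x : M.World), M.val φ x = 1

/-- Formulas of the language ℒ_{A^c}□ : ℒ_A□ extended with an extra constant `c`. -/
inductive FormAc : Type
  | var  : ℕ → FormAc
  | zero : FormAc
  | c    : FormAc
  | and  : FormAc → FormAc → FormAc
  | or   : FormAc → FormAc → FormAc
  | conj : FormAc → FormAc → FormAc
  | imp  : FormAc → FormAc → FormAc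
  | box  : FormAc → FormAc

/-- A K(A^c)-model: a K(A)-model together with a real `cM` interpreting `c`. -/
structure KAcModel where
  World : Type
  ne : Nonempty World
  R : World → World → Prop
  V : ℕ → World → ℝ
  r : ℝ
  hr : 0 ≤ r
  hV : ∀ p x, V p x ∈ Set.Icc (-r) r
  cM : ℝ

/-- The valuation extended to all ℒ_{A^c}□-formulas (`sInf ∅ = 0` in `ℝ`, matching
the convention that the infimum of the empty set is 0). -/
noncomputable def KAcModel.val (M : KAcModel) : FormAc → M.World → ℝ
  | .var p, x => M.V p x
  | .zero, _ => 0
  | .c, _ => M.cM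
  | .and φ ψ, x => min (M.val φ x) (M.val ψ x)
  | .or φ ψ, x => max (M.val φ x) (M.val ψ x)
  | .conj φ ψ, x => M.val φ x + M.val ψ x
  | .imp φ ψ, x => M.val ψ x - M.val φ x
  | .box φ, x => sInf {v : ℝ | ∃ y, M.R x y ∧ M.val φ y = v}

/-- K(A^c)-validity. -/
def KAcValid (φ : FormAc) : Prop := ∀ (M : KAcModel) (x : M.World), 0 ≤ M.val φ x

/-- `⊥ := c ∧ ¬c`, where `¬φ := φ → 0̄`. -/
def botAc : FormAc := .and .c (.imp .c .zero)

/-- The translation * from ℒ_Ł□-formulas to ℒ_{A^c}□-formulas. -/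
def star : FormL → FormAc
  | .var p => .or (.and (.var p) .zero) botAc
  | .neg φ => .imp (star φ) botAc
  | .limp φ ψ => .and (.imp (star φ) (star ψ)) .zero
  | .box φ => .box (star φ)


/-! ### Auxiliary lemmas -/

/-- KL-valuations always lie in [0,1]. -/
lemma KLModel.val_mem (M : KLModel) (φ : FormL) : ∀ x, M.val φ x ∈ Set.Icc (0 : ℝ) 1 := by
  induction φ with
  | var p => exact fun x => M.hV p x
  | neg φ ih =>
    intro x
    obtain ⟨h1, h2⟩ := ih x
    show (1 : ℝ) - M.val φ x ∈ Set.Icc (0 : ℝ) 1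
    exact ⟨by linarith, by linarith⟩
  | limp φ ψ ihφ ihψ =>
    intro x
    obtain ⟨h1, h2⟩ := ihφ x
    obtain ⟨h3, h4⟩ := ihψ x
    show min 1 (1 - M.val φ x + M.val ψ x) ∈ Set.Icc (0 : ℝ) 1
    exact ⟨le_min (by norm_num) (by linarith), min_le_left _ _⟩
  | box φ ih =>
    intro x
    show sInf (insert 1 {v : ℝ | ∃ y, M.R x y ∧ M.val φ y = v}) ∈ Set.Icc (0 : ℝ) 1
    constructor
    · apply le_csInf ⟨1, Set.mem_insert _ _⟩
      rintro v hv
      simp only [Set.mem_insert_iff, Set.mem_setOf_eq] at hv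
      rcases hv with rfl | ⟨y, _, rfl⟩
      · norm_num
      · exact (ih y).1
    · refine csInf_le ⟨0, ?_⟩ (Set.mem_insert _ _)
      rintro v hv
      simp only [Set.mem_insert_iff, Set.mem_setOf_eq] at hv
      rcases hv with rfl | ⟨y, _, rfl⟩
      · norm_num
      · exact (ih y).1

lemma min_cM (c : ℝ) : min c (0 - c) = -|c| := by
  rcases le_total c 0 with h | h
  · rw [abs_of_nonpos h, neg_neg, min_eq_left (by linarith)]
  · rw [abs_of_nonneg h, min_eq_right (by linarith)]; ring

/-- If cM = 0 then every translated formula takes value 0 everywhere. -/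
lemma star_val_zero (M : KAcModel) (h : M.cM = 0) (φ : FormL) :
    ∀ x, M.val (star φ) x = 0 := by
  induction φ with
  | var p =>
    intro x
    show max (min (M.V p x) 0) (min M.cM (0 - M.cM)) = 0
    rw [min_cM, h]
    simp only [abs_zero, neg_zero]
    exact max_eq_right (min_le_right _ _)
  | neg φ ih =>
    intro x
    show min M.cM (0 - M.cM) - M.val (star φ) x = 0
    rw [min_cM, h, ih x]; norm_num
  | limp φ ψ ihφ ihψ =>
    intro x
    show min (M.val (star ψ) x - M.val (star φ) x) 0 = 0
    rw [ihφ x, ihψ x]; norm_num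
  | box φ ih =>
    intro x
    show sInf {v : ℝ | ∃ y, M.R x y ∧ M.val (star φ) y = v} = 0
    have hsub : {v : ℝ | ∃ y, M.R x y ∧ M.val (star φ) y = v} ⊆ {0} := by
      rintro v ⟨y, _, rfl⟩
      simp [ih y]
    rcases Set.subset_singleton_iff_eq.mp hsub with he | he
    · rw [he, Real.sInf_empty]
    · rw [he, csInf_singleton]

/-- The K(Ł)-model induced by a K(A^c)-model. -/
noncomputable def KAcModel.toKL (M : KAcModel) : KLModel where
  World := M.World
  ne := M.ne
  R := M.R
  V := fun p x => 1 - max (min (M.V p x) 0) (-|M.cM|) / (-|M.cM|)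
  hV := by
    intro p x
    show (1 : ℝ) - max (min (M.V p x) 0) (-|M.cM|) / (-|M.cM|) ∈ Set.Icc (0 : ℝ) 1
    set b : ℝ := -|M.cM| with hb
    set t : ℝ := max (min (M.V p x) 0) b with ht
    have hb0 : b ≤ 0 := neg_nonpos.mpr (abs_nonneg _)
    have ht0 : t ≤ 0 := max_le (min_le_right _ _) hb0
    have hbt : b ≤ t := le_max_right _ _
    have h1 : 0 ≤ t / b := by
      rw [← neg_div_neg_eq]; exact div_nonneg (by linarith) (by linarith)
    have h2 : t / b ≤ 1 := by
      rcases eq_or_lt_of_le hb0 with h | h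
      · rw [h, div_zero]; norm_num
      · rw [← neg_div_neg_eq, div_le_one (by linarith)]; linarith
    exact ⟨by linarith, by linarith⟩

lemma toKL_V (M : KAcModel) (p : ℕ) (x : M.World) :
    M.toKL.V p x = 1 - max (min (M.V p x) 0) (-|M.cM|) / (-|M.cM|) := rfl

/-- Fundamental simulation lemma for `cM ≠ 0`. -/
lemma star_val (M : KAcModel) (h : M.cM ≠ 0) (φ : FormL) :
    ∀ x : M.World, M.val (star φ) x = (-|M.cM|) * (1 - M.toKL.val φ x) := by
  have hb : (-|M.cM| : ℝ) < 0 := neg_neg_of_pos (abs_pos.mpr h)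
  induction φ with
  | var p =>
    intro x
    show max (min (M.V p x) 0) (min M.cM (0 - M.cM))
        = -|M.cM| * (1 - (1 - max (min (M.V p x) 0) (-|M.cM|) / (-|M.cM|)))
    rw [min_cM]
    set b : ℝ := -|M.cM| with hbdef
    set t : ℝ := max (min (M.V p x) 0) b with htdef
    rw [show (1 : ℝ) - (1 - t / b) = t / b by ring, mul_comm,
      div_mul_cancel₀ t (ne_of_lt hb)]
  | neg φ ih =>
    intro x
    show min M.cM (0 - M.cM) - M.val (star φ) x
        = -|M.cM| * (1 - (1 - M.toKL.val φ x))
    rw [min_cM, ih x]; ring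
  | limp φ ψ ihφ ihψ =>
    intro x
    show min (M.val (star ψ) x - M.val (star φ) x) 0
        = -|M.cM| * (1 - min 1 (1 - M.toKL.val φ x + M.toKL.val ψ x))
    rw [ihφ x, ihψ x]
    set b : ℝ := -|M.cM| with hbdef
    set a : ℝ := M.toKL.val φ x with ha
    set c : ℝ := M.toKL.val ψ x with hc
    rcases le_total a c with h' | h'
    · rw [min_eq_left (by linarith : (1:ℝ) ≤ 1 - a + c),
        min_eq_right (by nlinarith : (0:ℝ) ≤ b * (1 - c) - b * (1 - a))]
      ring
    · rw [min_eq_right (by linarith : (1:ℝ) - a + c ≤ 1),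
        min_eq_left (by nlinarith : b * (1 - c) - b * (1 - a) ≤ 0)]
      ring
  | box φ ih =>
    intro x
    show sInf {v : ℝ | ∃ y, M.R x y ∧ M.val (star φ) y = v}
        = -|M.cM| * (1 - sInf (insert 1 {v : ℝ | ∃ y, M.R x y ∧ M.toKL.val φ y = v}))
    set b : ℝ := -|M.cM| with hbdef
    set S : Set ℝ := {v : ℝ | ∃ y, M.R x y ∧ M.toKL.val φ y = v} with hS
    have hset : {v : ℝ | ∃ y, M.R x y ∧ M.val (star φ) y = v}
        = (fun t => b * (1 - t)) '' S := by
      ext v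
      simp only [Set.mem_image, hS, Set.mem_setOf_eq]
      constructor
      · rintro ⟨y, h1, rfl⟩
        exact ⟨M.toKL.val φ y, ⟨y, h1, rfl⟩, (ih y).symm⟩
      · rintro ⟨t, ⟨y, h1, rfl⟩, rfl⟩
        exact ⟨y, h1, ih y⟩
    rw [hset]
    rcases Set.eq_empty_or_nonempty S with hSe | hSne
    · rw [hSe, Set.image_empty, Real.sInf_empty,
        show insert (1:ℝ) (∅ : Set ℝ) = {1} by simp, csInf_singleton]
      ring
    · have hbdd : BddBelow S := by
        refine ⟨0, ?_⟩
        rintro v ⟨y, _, rfl⟩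
        exact (KLModel.val_mem M.toKL φ y).1
      have hub : ∀ v ∈ S, v ≤ 1 := by
        rintro v ⟨y, _, rfl⟩
        exact (KLModel.val_mem M.toKL φ y).2
      have hmono : Monotone (fun t : ℝ => b * (1 - t)) := by
        intro u w huw
        simp only []
        nlinarith
      have hcont : ContinuousAt (fun t : ℝ => b * (1 - t)) (sInf S) := by fun_prop
      rw [← hmono.map_csInf_of_continuousAt hcont hSne hbdd]
      have h1 : sInf (insert 1 S) = sInf S := by
        rw [csInf_insert hbdd hSne]
        obtain ⟨s0, hs0⟩ := hSne
        exact min_eq_right (le_trans (csInf_le hbdd hs0) (hub s0 hs0))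
      rw [h1]

lemma KLModel.val_ext {W : Type} {ne ne' : Nonempty W} {R : W → W → Prop}
    {V V' : ℕ → W → ℝ} {hV hV'} (h : ∀ p x, V p x = V' p x) (φ : FormL) (x : W) :
    (KLModel.mk W ne R V hV).val φ x = (KLModel.mk W ne' R V' hV').val φ x := by
  have hVV : V = V' := funext fun p => funext (h p)
  subst hVV
  rfl

/-- The K(A^c)-model induced by a K(Ł)-model. -/
def KLModel.toKAc (N : KLModel) : KAcModel where
  World := N.World
  ne := N.ne
  R := N.R
  V := fun p y => N.V p y - 1
  r := 1
  hr := zero_le_one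
  hV := by
    intro p y
    obtain ⟨h1, h2⟩ := N.hV p y
    show N.V p y - 1 ∈ Set.Icc (-(1:ℝ)) 1
    exact ⟨by linarith, by linarith⟩
  cM := -1

lemma toKAc_toKL_val (N : KLModel) (φ : FormL) (x : N.World) :
    N.toKAc.toKL.val φ x = N.val φ x := by
  obtain ⟨W, hne, R, V, hVN⟩ := N
  apply KLModel.val_ext
  intro p y
  obtain ⟨h1, h2⟩ := hVN p y
  show 1 - max (min (V p y - 1) 0) (-|(-1 : ℝ)|) / (-|(-1 : ℝ)|) = V p y
  have habs : (-|(-1 : ℝ)| : ℝ) = -1 := by norm_num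
  rw [habs, min_eq_left (by linarith), max_eq_left (by linarith)]
  rw [div_neg, div_one]
  ring

/-- For every ℒ_Ł□-formula φ: φ is K(Ł)-valid if and only if its
translation φ* is K(A^c)-valid. -/
theorem stmt_1 (φ : FormL) : KLValid φ ↔ KAcValid (star φ) := by
  constructor
  · intro hL M x
    by_cases h : M.cM = 0
    · rw [star_val_zero M h φ x]
    · rw [star_val M h φ x, hL M.toKL x]
      simp
  · intro hA N x
    have h1 := hA N.toKAc x
    rw [star_val N.toKAc (by show (-1 : ℝ) ≠ 0; norm_num) φ x,
      toKAc_toKL_val,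
      show (-|N.toKAc.cM| : ℝ) = -1 by show (-|(-1 : ℝ)| : ℝ) = -1; norm_num] at h1
    have h2 := (N.val_mem φ x).2
    linarith
end

section
/- Soundness of the labelled tableau calculus: if an ℒ_A□-formula φ is LK(A)-derivable (i.e., there exists a closed LK(A)-tableau for φ), then φ is K(A)-valid. -/
/-- A labelled formula: an ℒ_A□-formula together with a label in ℕ. -/
abbrev LabForm := FormA × ℕ

/-- A labelled inequation `Γ ▷ Δ` between finite multisets of labelled formulas,
where `▷` is `>` if `strict` and `≥` otherwise. -/
structure Ineq where
  strict : Bool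
  lhs : Multiset LabForm
  rhs : Multiset LabForm

/-- Tableau nodes: labelled inequations, and relations `r i j`. -/
inductive TNode
  | ineq : Ineq → TNode
  | rel : ℕ → ℕ → TNode

/-- A branch: a finite list of tableau nodes. -/
abbrev Branch := List TNode

/-- The formulas treated as variables of the associated linear system:
labelled variables and labelled boxed formulas. -/
def FormA.IsAtomic : FormA → Prop
  | .var _ => True
  | .box _ => True
  | _ => False

/-- An inequation all of whose formulas are labelled variables or labelled boxed
formulas, i.e. one belonging to the associated system of a branch. -/
def Ineq.Pure (I : Ineq) : Prop := ∀ f ∈ I.lhs + I.rhs, FormA.IsAtomic (Prod.fst f)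

/-- Sum of the values of a multiset of labelled formulas under an assignment. -/
noncomputable def msum (e : LabForm → ℝ) (Γ : Multiset LabForm) : ℝ := (Γ.map e).sum

/-- An assignment satisfies a labelled inequation (read as an inequation between
formal sums, the empty multiset being 0). -/
def Ineq.Holds (e : LabForm → ℝ) (I : Ineq) : Prop :=
  if I.strict then msum e I.rhs < msum e I.lhs else msum e I.rhs ≤ msum e I.lhs

/-- A branch is closed if its associated system of inequations is inconsistent
over ℝ. -/
def Branch.IsClosed (B : Branch) : Prop :=
  ¬ ∃ e : LabForm → ℝ, ∀ I : Ineq, TNode.ineq I ∈ B → I.Pure → I.Holds e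

/-- The labels occurring in a tableau node. -/
def TNode.labels : TNode → Multiset ℕ
  | .ineq I => I.lhs.map Prod.snd + I.rhs.map Prod.snd
  | .rel i j => {i, j}

/-- A label is fresh for a branch if it occurs nowhere on it. -/
def Fresh (j : ℕ) (B : Branch) : Prop := ∀ t ∈ B, j ∉ t.labels

/-- `Closable B` holds iff the branch `B` can be extended, using the rules of the
labelled tableau calculus LK(A), to a finite subtree all of whose branches are
closed.  Thus a closed LK(A)-tableau for φ exists iff the initial branch for φ is
closable. -/
inductive Closable : Branch → Prop
  | closed {B : Branch} : B.IsClosed → Closable B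
  | zeroL {B : Branch} {s : Bool} {Γ Δ : Multiset LabForm} {i : ℕ} :
      TNode.ineq ⟨s, Γ + {(.zero, i)}, Δ⟩ ∈ B →
      Closable (TNode.ineq ⟨s, Γ, Δ⟩ :: B) → Closable B
  | zeroR {B : Branch} {s : Bool} {Γ Δ : Multiset LabForm} {i : ℕ} :
      TNode.ineq ⟨s, Γ, {(FormA.zero, i)} + Δ⟩ ∈ B →
      Closable (TNode.ineq ⟨s, Γ, Δ⟩ :: B) → Closable B
  | conjL {B : Branch} {s : Bool} {Γ Δ : Multiset LabForm} {i : ℕ} {φ ψ : FormA} :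
      TNode.ineq ⟨s, Γ + {(.conj φ ψ, i)}, Δ⟩ ∈ B →
      Closable (TNode.ineq ⟨s, Γ + {(φ, i), (ψ, i)}, Δ⟩ :: B) → Closable B
  | conjR {B : Branch} {s : Bool} {Γ Δ : Multiset LabForm} {i : ℕ} {φ ψ : FormA} :
      TNode.ineq ⟨s, Γ, {(FormA.conj φ ψ, i)} + Δ⟩ ∈ B →
      Closable (TNode.ineq ⟨s, Γ, {(φ, i), (ψ, i)} + Δ⟩ :: B) → Closable B
  | impL {B : Branch} {s : Bool} {Γ Δ : Multiset LabForm} {i : ℕ} {φ ψ : FormA} :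
      TNode.ineq ⟨s, Γ + {(.imp φ ψ, i)}, Δ⟩ ∈ B →
      Closable (TNode.ineq ⟨s, Γ + {(ψ, i)}, {(φ, i)} + Δ⟩ :: B) → Closable B
  | impR {B : Branch} {s : Bool} {Γ Δ : Multiset LabForm} {i : ℕ} {φ ψ : FormA} :
      TNode.ineq ⟨s, Γ, {(FormA.imp φ ψ, i)} + Δ⟩ ∈ B →
      Closable (TNode.ineq ⟨s, Γ + {(φ, i)}, {(ψ, i)} + Δ⟩ :: B) → Closable B
  | andL {B : Branch} {s : Bool} {Γ Δ : Multiset LabForm} {i : ℕ} {φ ψ : FormA} :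
      TNode.ineq ⟨s, Γ + {(.and φ ψ, i)}, Δ⟩ ∈ B →
      Closable (TNode.ineq ⟨s, Γ + {(φ, i)}, Δ⟩ ::
                TNode.ineq ⟨s, Γ + {(ψ, i)}, Δ⟩ :: B) → Closable B
  | orR {B : Branch} {s : Bool} {Γ Δ : Multiset LabForm} {i : ℕ} {φ ψ : FormA} :
      TNode.ineq ⟨s, Γ, {(FormA.or φ ψ, i)} + Δ⟩ ∈ B →
      Closable (TNode.ineq ⟨s, Γ, {(φ, i)} + Δ⟩ ::
                TNode.ineq ⟨s, Γ, {(ψ, i)} + Δ⟩ :: B) → Closable B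
  | orL {B : Branch} {s : Bool} {Γ Δ : Multiset LabForm} {i : ℕ} {φ ψ : FormA} :
      TNode.ineq ⟨s, Γ + {(.or φ ψ, i)}, Δ⟩ ∈ B →
      Closable (TNode.ineq ⟨s, Γ + {(φ, i)}, Δ⟩ :: B) →
      Closable (TNode.ineq ⟨s, Γ + {(ψ, i)}, Δ⟩ :: B) → Closable B
  | andR {B : Branch} {s : Bool} {Γ Δ : Multiset LabForm} {i : ℕ} {φ ψ : FormA} :
      TNode.ineq ⟨s, Γ, {(FormA.and φ ψ, i)} + Δ⟩ ∈ B →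
      Closable (TNode.ineq ⟨s, Γ, {(φ, i)} + Δ⟩ :: B) →
      Closable (TNode.ineq ⟨s, Γ, {(ψ, i)} + Δ⟩ :: B) → Closable B
  | boxL {B : Branch} {s : Bool} {Γ Δ : Multiset LabForm} {i j : ℕ} {φ : FormA} :
      TNode.rel i j ∈ B →
      TNode.ineq ⟨s, Γ + {(.box φ, i)}, Δ⟩ ∈ B →
      Closable (TNode.ineq ⟨false, {(φ, j)}, {(FormA.box φ, i)}⟩ :: B) → Closable B
  | boxR {B : Branch} {s : Bool} {Γ Δ : Multiset LabForm} {i : ℕ} {φ : FormA} (j : ℕ) :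
      TNode.ineq ⟨s, Γ, {(FormA.box φ, i)} + Δ⟩ ∈ B →
      Fresh j B →
      Closable (TNode.ineq ⟨false, {(FormA.box φ, i)}, {(φ, j)}⟩ ::
                TNode.rel i j :: B) → Closable B
  | ex {B : Branch} {i k : ℕ} (j : ℕ) :
      TNode.rel i k ∈ B →
      Fresh j B →
      Closable (TNode.rel k j :: B) → Closable B

/-- φ is LK(A)-derivable: there is a closed LK(A)-tableau with root node
`[] > [φ^1]` and covering node `r 1 2`. -/
def LKDerivable (φ : FormA) : Prop :=
  Closable [TNode.ineq ⟨true, 0, {(φ, 1)}⟩, TNode.rel 1 2]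
section Aux
open Multiset in
lemma msum_zero (e : LabForm → ℝ) : msum e 0 = 0 := rfl

lemma msum_cons (e : LabForm → ℝ) (a : LabForm) (Γ : Multiset LabForm) :
    msum e (a ::ₘ Γ) = e a + msum e Γ := by
  simp [msum]

lemma msum_add (e : LabForm → ℝ) (Γ Δ : Multiset LabForm) :
    msum e (Γ + Δ) = msum e Γ + msum e Δ := by
  simp [msum]

lemma msum_singleton (e : LabForm → ℝ) (a : LabForm) : msum e {a} = e a := by
  simp [msum]

lemma msum_pair (e : LabForm → ℝ) (a b : LabForm) : msum e {a, b} = e a + e b := by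
  rw [show ({a, b} : Multiset LabForm) = a ::ₘ {b} from rfl, msum_cons, msum_singleton]

lemma msum_congr {e e' : LabForm → ℝ} {Γ : Multiset LabForm}
    (h : ∀ f ∈ Γ, e f = e' f) : msum e Γ = msum e' Γ := by
  unfold msum
  rw [Multiset.map_congr rfl h]

lemma continuous_msum (Γ : Multiset LabForm) :
    Continuous fun e : LabForm → ℝ => msum e Γ := by
  induction Γ using Multiset.induction with
  | empty => simpa [msum] using continuous_const
  | cons a Γ ih =>
    simp only [msum_cons]
    exact (continuous_apply a).add ih

/-- A bound on the absolute value of formulas, given the bound `r` on variables. -/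
noncomputable def bnd (r : ℝ) : FormA → ℝ
  | .var _ => r
  | .zero => 0
  | .and φ ψ => max (bnd r φ) (bnd r ψ)
  | .or φ ψ => max (bnd r φ) (bnd r ψ)
  | .conj φ ψ => bnd r φ + bnd r ψ
  | .imp φ ψ => bnd r φ + bnd r ψ
  | .box φ => bnd r φ

lemma bnd_nonneg {r : ℝ} (hr : 0 ≤ r) : ∀ ψ, 0 ≤ bnd r ψ := by
  intro ψ
  induction ψ with
  | var p => exact hr
  | zero => exact le_refl 0
  | and φ ψ ih1 ih2 => exact le_max_of_le_left ih1
  | or φ ψ ih1 ih2 => exact le_max_of_le_left ih1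
  | conj φ ψ ih1 ih2 => exact add_nonneg ih1 ih2
  | imp φ ψ ih1 ih2 => exact add_nonneg ih1 ih2
  | box φ ih => exact ih

lemma val_bounds (M : KAModel) : ∀ (ψ : FormA) (x : M.World),
    M.val ψ x ∈ Set.Icc (-(bnd M.r ψ)) (bnd M.r ψ) := by
  intro ψ
  induction ψ with
  | var p => exact fun x => by simpa [KAModel.val, bnd] using M.hV p x
  | zero => exact fun x => by simp [KAModel.val, bnd]
  | and φ ψ ih1 ih2 =>
    intro x
    have h1 := ih1 x; have h2 := ih2 x
    simp only [KAModel.val, bnd, Set.mem_Icc] at *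
    constructor
    · rcases min_choice (M.val φ x) (M.val ψ x) with h | h <;> rw [h] <;>
        [exact le_trans (neg_le_neg (le_max_left _ _)) h1.1;
         exact le_trans (neg_le_neg (le_max_right _ _)) h2.1]
    · exact le_trans (min_le_left _ _) (le_trans h1.2 (le_max_left _ _))
  | or φ ψ ih1 ih2 =>
    intro x
    have h1 := ih1 x; have h2 := ih2 x
    simp only [KAModel.val, bnd, Set.mem_Icc] at *
    constructor
    · exact le_trans (le_trans (neg_le_neg (le_max_left _ _)) h1.1) (le_max_left _ _)
    · rcases max_choice (M.val φ x) (M.val ψ x) with h | h <;> rw [h] <;>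
        [exact le_trans h1.2 (le_max_left _ _);
         exact le_trans h2.2 (le_max_right _ _)]
  | conj φ ψ ih1 ih2 =>
    intro x
    have h1 := ih1 x; have h2 := ih2 x
    simp only [KAModel.val, bnd, Set.mem_Icc] at *
    constructor <;> [linarith [h1.1, h2.1]; linarith [h1.2, h2.2]]
  | imp φ ψ ih1 ih2 =>
    intro x
    have h1 := ih1 x; have h2 := ih2 x
    simp only [KAModel.val, bnd, Set.mem_Icc] at *
    constructor <;> [linarith [h1.1, h2.2]; linarith [h1.2, h2.1]]
  | box φ ih =>
    intro x
    simp only [KAModel.val, bnd, Set.mem_Icc]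
    set S : Set ℝ := {v : ℝ | ∃ y, M.R x y ∧ M.val φ y = v} with hS
    by_cases hne : S.Nonempty
    · constructor
      · refine le_csInf hne ?_
        rintro v ⟨y, -, rfl⟩
        exact (ih y).1
      · obtain ⟨v, y, hy, rfl⟩ := hne
        refine le_trans (csInf_le ⟨-(bnd M.r φ), ?_⟩ ⟨y, hy, rfl⟩) (ih y).2
        rintro v ⟨z, -, rfl⟩
        exact (ih z).1
    · rw [Set.not_nonempty_iff_eq_empty] at hne
      rw [hne, Real.sInf_empty]
      have := bnd_nonneg M.hr φ
      constructor <;> linarith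
end Aux
section Serial

def Serial (M : KAModel) : Prop := ∀ x : M.World, ∃ y, M.R x y

lemma bddBelow_succSet (M : KAModel) (φ : FormA) (x : M.World) :
    BddBelow {v : ℝ | ∃ y, M.R x y ∧ M.val φ y = v} := by
  refine ⟨-(bnd M.r φ), ?_⟩
  rintro v ⟨y, -, rfl⟩
  exact (val_bounds M φ y).1

lemma box_le (M : KAModel) {x y : M.World} (h : M.R x y) (φ : FormA) :
    M.val (.box φ) x ≤ M.val φ y := by
  have : M.val (.box φ) x = sInf {v : ℝ | ∃ y, M.R x y ∧ M.val φ y = v} := rfl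
  rw [this]
  exact csInf_le (bddBelow_succSet M φ x) ⟨y, h, rfl⟩

lemma box_witness (M : KAModel) (hser : Serial M) (x : M.World) (φ : FormA) {ε : ℝ}
    (hε : 0 < ε) : ∃ y, M.R x y ∧ M.val φ y < M.val (.box φ) x + ε := by
  obtain ⟨y0, hy0⟩ := hser x
  have hne : Set.Nonempty {v : ℝ | ∃ y, M.R x y ∧ M.val φ y = v} := ⟨_, y0, hy0, rfl⟩
  have hval : M.val (.box φ) x = sInf {v : ℝ | ∃ y, M.R x y ∧ M.val φ y = v} := rfl
  have hlt : sInf {v : ℝ | ∃ y, M.R x y ∧ M.val φ y = v}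
      < M.val (.box φ) x + ε := by rw [hval]; linarith
  obtain ⟨v, ⟨y, hy, rfl⟩, hv⟩ := exists_lt_of_csInf_lt hne hlt
  exact ⟨y, hy, hv⟩

/-- The accessibility relation of the serialization of a model: a fresh world `none`
(where everything has value `0`) is added as a successor of every world without
successors and of itself. -/
def serialR (M : KAModel) : Option M.World → Option M.World → Prop
  | some x, some y => M.R x y
  | some x, none => ∀ y, ¬ M.R x y
  | none, none => True
  | none, some _ => False

/-- The serialization of a model. -/
noncomputable def serialize (M : KAModel) : KAModel where
  World := Option M.World
  ne := ⟨none⟩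
  R := serialR M
  V := fun p o => o.elim 0 (M.V p)
  r := M.r
  hr := M.hr
  hV := by
    rintro p (_ | x)
    · exact ⟨by simpa using M.hr, M.hr⟩
    · exact M.hV p x

lemma serialize_serial (M : KAModel) : Serial (serialize M) := by
  rintro (_ | x)
  · exact ⟨none, trivial⟩
  · by_cases h : ∃ y, M.R x y
    · obtain ⟨y, hy⟩ := h
      exact ⟨some y, hy⟩
    · push_neg at h
      exact ⟨none, h⟩

lemma serialR_none {M : KAModel} (y : Option M.World) : serialR M none y ↔ y = none := by
  cases y <;> simp [serialR]

lemma serialize_val_none (M : KAModel) (ψ : FormA) : (serialize M).val ψ none = 0 := by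
  induction ψ with
  | var p => rfl
  | zero => rfl
  | and φ ψ ih1 ih2 => simp [KAModel.val, ih1, ih2]
  | or φ ψ ih1 ih2 => simp [KAModel.val, ih1, ih2]
  | conj φ ψ ih1 ih2 => simp [KAModel.val, ih1, ih2]
  | imp φ ψ ih1 ih2 => simp [KAModel.val, ih1, ih2]
  | box φ ih =>
    have : {v : ℝ | ∃ y, (serialize M).R none y ∧ (serialize M).val φ y = v} = {0} := by
      ext v
      constructor
      · rintro ⟨y, hy, rfl⟩
        rw [show (serialize M).R none y ↔ y = none from serialR_none y] at hy
        subst hy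
        simp [ih]
      · rintro rfl
        exact ⟨none, trivial, ih⟩
    show sInf _ = 0
    rw [this, csInf_singleton]

lemma serialize_val_some (M : KAModel) (ψ : FormA) (x : M.World) :
    (serialize M).val ψ (some x) = M.val ψ x := by
  induction ψ generalizing x with
  | var p => rfl
  | zero => rfl
  | and φ ψ ih1 ih2 => simp [KAModel.val, ih1, ih2]
  | or φ ψ ih1 ih2 => simp [KAModel.val, ih1, ih2]
  | conj φ ψ ih1 ih2 => simp [KAModel.val, ih1, ih2]
  | imp φ ψ ih1 ih2 => simp [KAModel.val, ih1, ih2]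
  | box φ ih =>
    show sInf _ = sInf _
    by_cases h : ∃ y, M.R x y
    · congr 1
      ext v
      constructor
      · rintro ⟨y, hy, rfl⟩
        match y with
        | some y => exact ⟨y, hy, (ih y).symm⟩
        | none => exact absurd h (by simpa using (show ∀ y, ¬ M.R x y from hy))
      · rintro ⟨y, hy, rfl⟩
        exact ⟨some y, hy, ih y⟩
    · have h1 : {v : ℝ | ∃ y, (serialize M).R (some x) y ∧ (serialize M).val φ y = v}
          = {0} := by
        ext v
        constructor
        · rintro ⟨y, hy, rfl⟩
          match y with
          | some y => exact absurd ⟨y, hy⟩ h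
          | none => simp [serialize_val_none]
        · rintro rfl
          push_neg at h
          exact ⟨none, h, serialize_val_none M φ⟩
      have h2 : {v : ℝ | ∃ y, M.R x y ∧ M.val φ y = v} = ∅ := by
        push_neg at h
        ext v
        simp only [Set.mem_setOf_eq, Set.mem_empty_iff_false, iff_false]
        rintro ⟨y, hy, -⟩
        exact h y hy
      rw [h1, h2, csInf_singleton, Real.sInf_empty]

end Serial
section Good

/-- The semantic assignment induced by a model and an interpretation of labels. -/
noncomputable def sval (M : KAModel) (w : ℕ → M.World) : LabForm → ℝ :=
  fun f => M.val f.1 (w f.2)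

/-- Satisfaction of an inequation with slack `c`. -/
def SHolds (M : KAModel) (w : ℕ → M.World) (c : ℝ) (I : Ineq) : Prop :=
  msum (sval M w) I.rhs ≤ msum (sval M w) I.lhs + c

/-- The slack of an inequation: strict ones must hold with margin `δ`, nonstrict
ones may fail by `ε`. -/
def slack (I : Ineq) (δ ε : ℝ) : ℝ := if I.strict then -δ else ε

def GoodAt (M : KAModel) (δ : ℝ) (B : Branch) (ε : ℝ) : Prop :=
  ∃ w : ℕ → M.World,
    (∀ i j, TNode.rel i j ∈ B → M.R (w i) (w j)) ∧
    (∀ I : Ineq, TNode.ineq I ∈ B → SHolds M w (slack I δ ε) I)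

/-- The invariant: a branch is good if there is a serial model, a margin `δ > 0`,
and for every `ε > 0` an interpretation of labels such that all relation nodes
hold, strict inequations hold with margin `δ` and nonstrict ones up to `ε`. -/
def Good (B : Branch) : Prop :=
  ∃ M : KAModel, Serial M ∧ ∃ δ : ℝ, 0 < δ ∧ ∀ ε : ℝ, 0 < ε → GoodAt M δ B ε

lemma GoodAt.mono {M : KAModel} {δ : ℝ} {B : Branch} {ε ε' : ℝ} (h : ε ≤ ε')
    (hg : GoodAt M δ B ε) : GoodAt M δ B ε' := by
  obtain ⟨w, h1, h2⟩ := hg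
  refine ⟨w, h1, fun I hI => ?_⟩
  have := h2 I hI
  unfold SHolds slack at *
  split at this <;> split <;> simp_all <;> linarith

lemma rel_mem_of_cons_ineq {I : Ineq} {B : Branch} {i j : ℕ}
    (h : TNode.rel i j ∈ TNode.ineq I :: B) : TNode.rel i j ∈ B := by
  rcases List.mem_cons.1 h with h | h
  · exact absurd h (by simp)
  · exact h

lemma goodAt_step1 {M : KAModel} {δ ε : ℝ} {B : Branch} {J I : Ineq}
    (hs : I.strict = J.strict) (hJ : TNode.ineq J ∈ B)
    (himp : ∀ (w : ℕ → M.World) (c : ℝ), SHolds M w c J → SHolds M w c I) :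
    GoodAt M δ B ε → GoodAt M δ (TNode.ineq I :: B) ε := by
  rintro ⟨w, h1, h2⟩
  refine ⟨w, fun i j h => h1 i j (rel_mem_of_cons_ineq h), fun I' hI' => ?_⟩
  rcases List.mem_cons.1 hI' with h | h
  · obtain rfl : I' = I := by simpa using h
    have hh := himp w (slack J δ ε) (h2 J hJ)
    unfold slack at hh ⊢
    rwa [hs]
  · exact h2 I' h

lemma good_step1 {B : Branch} {J I : Ineq}
    (hs : I.strict = J.strict) (hJ : TNode.ineq J ∈ B)
    (himp : ∀ (M : KAModel) (w : ℕ → M.World) (c : ℝ), SHolds M w c J → SHolds M w c I) :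
    Good B → Good (TNode.ineq I :: B) := by
  rintro ⟨M, hser, δ, hδ, H⟩
  exact ⟨M, hser, δ, hδ, fun ε hε => goodAt_step1 hs hJ (himp M) (H ε hε)⟩

lemma good_step2 {B : Branch} {J I1 I2 : Ineq}
    (hs1 : I1.strict = J.strict) (hs2 : I2.strict = J.strict) (hJ : TNode.ineq J ∈ B)
    (himp1 : ∀ (M : KAModel) (w : ℕ → M.World) (c : ℝ), SHolds M w c J → SHolds M w c I1)
    (himp2 : ∀ (M : KAModel) (w : ℕ → M.World) (c : ℝ), SHolds M w c J → SHolds M w c I2) :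
    Good B → Good (TNode.ineq I1 :: TNode.ineq I2 :: B) := by
  rintro ⟨M, hser, δ, hδ, H⟩
  refine ⟨M, hser, δ, hδ, fun ε hε => ?_⟩
  exact goodAt_step1 hs1 (List.mem_cons_of_mem _ hJ) (himp1 M)
    (goodAt_step1 hs2 hJ (himp2 M) (H ε hε))

lemma good_branch {B : Branch} {J I1 I2 : Ineq}
    (hs1 : I1.strict = J.strict) (hs2 : I2.strict = J.strict) (hJ : TNode.ineq J ∈ B)
    (himp : ∀ (M : KAModel) (w : ℕ → M.World) (c : ℝ),
      SHolds M w c J → SHolds M w c I1 ∨ SHolds M w c I2) :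
    Good B → Good (TNode.ineq I1 :: B) ∨ Good (TNode.ineq I2 :: B) := by
  rintro ⟨M, hser, δ, hδ, H⟩
  have key : ∀ ε : ℝ, 0 < ε →
      GoodAt M δ (TNode.ineq I1 :: B) ε ∨ GoodAt M δ (TNode.ineq I2 :: B) ε := by
    intro ε hε
    obtain ⟨w, h1, h2⟩ := H ε hε
    have hrel : ∀ i j, TNode.rel i j ∈ TNode.ineq I1 :: B → M.R (w i) (w j) :=
      fun i j h => h1 i j (rel_mem_of_cons_ineq h)
    have hrel2 : ∀ i j, TNode.rel i j ∈ TNode.ineq I2 :: B → M.R (w i) (w j) :=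
      fun i j h => h1 i j (rel_mem_of_cons_ineq h)
    rcases himp M w (slack J δ ε) (h2 J hJ) with h | h
    · left
      refine ⟨w, hrel, fun I' hI' => ?_⟩
      rcases List.mem_cons.1 hI' with heq | hm
      · obtain rfl : I' = I1 := by simpa using heq
        simpa [slack, hs1] using h
      · exact h2 I' hm
    · right
      refine ⟨w, hrel2, fun I' hI' => ?_⟩
      rcases List.mem_cons.1 hI' with heq | hm
      · obtain rfl : I' = I2 := by simpa using heq
        simpa [slack, hs2] using h
      · exact h2 I' hm
  by_cases hall : ∀ ε : ℝ, 0 < ε → GoodAt M δ (TNode.ineq I1 :: B) ε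
  · exact Or.inl ⟨M, hser, δ, hδ, hall⟩
  · push_neg at hall
    obtain ⟨ε1, hε1, hne⟩ := hall
    refine Or.inr ⟨M, hser, δ, hδ, fun ε hε => ?_⟩
    have hmin : (0:ℝ) < min ε ε1 := lt_min hε hε1
    rcases key _ hmin with h | h
    · exact absurd (h.mono (min_le_right ε ε1)) hne
    · exact h.mono (min_le_left ε ε1)

end Good
section BoxEx

lemma msum_update {M : KAModel} {w : ℕ → M.World} {j : ℕ} {y : M.World}
    {Γ : Multiset LabForm} (h : ∀ f ∈ Γ, f.2 ≠ j) :
    msum (sval M (Function.update w j y)) Γ = msum (sval M w) Γ :=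
  msum_congr fun f hf => by simp [sval, Function.update_of_ne (h f hf)]

lemma shold_update {M : KAModel} {w : ℕ → M.World} {j : ℕ} {y : M.World}
    {c : ℝ} {I : Ineq} (hj : j ∉ (TNode.ineq I).labels) :
    SHolds M (Function.update w j y) c I ↔ SHolds M w c I := by
  have hl : ∀ f ∈ I.lhs, f.2 ≠ j := by
    intro f hf hfj
    exact hj (by
      simp only [TNode.labels, Multiset.mem_add]
      exact Or.inl (hfj ▸ Multiset.mem_map_of_mem _ hf))
  have hr : ∀ f ∈ I.rhs, f.2 ≠ j := by
    intro f hf hfj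
    exact hj (by
      simp only [TNode.labels, Multiset.mem_add]
      exact Or.inr (hfj ▸ Multiset.mem_map_of_mem _ hf))
  unfold SHolds
  rw [msum_update hl, msum_update hr]

lemma ineq_mem_of_cons_rel {I : Ineq} {B : Branch} {i j : ℕ}
    (h : TNode.ineq I ∈ TNode.rel i j :: B) : TNode.ineq I ∈ B := by
  rcases List.mem_cons.1 h with h | h
  · exact absurd h (by simp)
  · exact h

lemma good_boxL {B : Branch} {i j : ℕ} {φ : FormA} (hrel : TNode.rel i j ∈ B) :
    Good B → Good (TNode.ineq ⟨false, {(φ, j)}, {(FormA.box φ, i)}⟩ :: B) := by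
  rintro ⟨M, hser, δ, hδ, H⟩
  refine ⟨M, hser, δ, hδ, fun ε hε => ?_⟩
  obtain ⟨w, h1, h2⟩ := H ε hε
  refine ⟨w, fun i' j' h => h1 i' j' (rel_mem_of_cons_ineq h), fun I' hI' => ?_⟩
  rcases List.mem_cons.1 hI' with heq | hm
  · obtain rfl : I' = ⟨false, {(φ, j)}, {(FormA.box φ, i)}⟩ := by simpa using heq
    show SHolds M w (slack _ δ ε) _
    unfold SHolds slack
    simp only [if_neg (by simp : ¬ (Ineq.strict ⟨false, _, _⟩ = true)), msum_singleton, sval]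
    have := box_le M (h1 i j hrel) φ
    linarith
  · exact h2 I' hm

lemma good_boxR {B : Branch} {s : Bool} {Γ Δ : Multiset LabForm} {i j : ℕ} {φ : FormA}
    (hJ : TNode.ineq ⟨s, Γ, {(FormA.box φ, i)} + Δ⟩ ∈ B) (hf : Fresh j B) :
    Good B → Good (TNode.ineq ⟨false, {(FormA.box φ, i)}, {(φ, j)}⟩ ::
      TNode.rel i j :: B) := by
  rintro ⟨M, hser, δ, hδ, H⟩
  have hij : i ≠ j := by
    intro h
    apply hf _ hJ
    subst h
    simp [TNode.labels]
  refine ⟨M, hser, δ, hδ, fun ε hε => ?_⟩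
  obtain ⟨w, h1, h2⟩ := H ε hε
  obtain ⟨y, hy, hvy⟩ := box_witness M hser (w i) φ hε
  refine ⟨Function.update w j y, ?_, ?_⟩
  · intro i' j' h
    rcases List.mem_cons.1 h with h | h
    · exact absurd h (by simp)
    rcases List.mem_cons.1 h with h | h
    · obtain ⟨rfl, rfl⟩ : i' = i ∧ j' = j := by
        constructor <;> injection h
      rw [Function.update_of_ne hij, Function.update_self]
      exact hy
    · have hne : i' ≠ j ∧ j' ≠ j := by
        have := hf _ h
        simp only [TNode.labels] at this
        constructor <;> rintro rfl <;> simp_all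
      rw [Function.update_of_ne hne.1, Function.update_of_ne hne.2]
      exact h1 i' j' h
  · intro I' hI'
    rcases List.mem_cons.1 hI' with heq | hm
    · obtain rfl : I' = ⟨false, {(FormA.box φ, i)}, {(φ, j)}⟩ := by simpa using heq
      show SHolds M _ (slack _ δ ε) _
      unfold SHolds slack
      simp only [if_neg (by simp : ¬ (Ineq.strict ⟨false, _, _⟩ = true)), msum_singleton, sval]
      rw [Function.update_self, Function.update_of_ne hij]
      exact le_of_lt hvy
    · have hm' : TNode.ineq I' ∈ B := ineq_mem_of_cons_rel hm
      rw [shold_update (hf _ hm')]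
      exact h2 I' hm'

lemma good_ex {B : Branch} {i k j : ℕ} (hrel : TNode.rel i k ∈ B) (hf : Fresh j B) :
    Good B → Good (TNode.rel k j :: B) := by
  rintro ⟨M, hser, δ, hδ, H⟩
  have hkj : k ≠ j := by
    intro h
    apply hf _ hrel
    subst h
    simp [TNode.labels]
  refine ⟨M, hser, δ, hδ, fun ε hε => ?_⟩
  obtain ⟨w, h1, h2⟩ := H ε hε
  obtain ⟨y, hy⟩ := hser (w k)
  refine ⟨Function.update w j y, ?_, ?_⟩
  · intro i' j' h
    rcases List.mem_cons.1 h with h | h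
    · obtain ⟨rfl, rfl⟩ : i' = k ∧ j' = j := by
        constructor <;> injection h
      rw [Function.update_of_ne hkj, Function.update_self]
      exact hy
    · have hne : i' ≠ j ∧ j' ≠ j := by
        have := hf _ h
        simp only [TNode.labels] at this
        constructor <;> rintro rfl <;> simp_all
      rw [Function.update_of_ne hne.1, Function.update_of_ne hne.2]
      exact h1 i' j' h
  · intro I' hI'
    have hm' : TNode.ineq I' ∈ B := ineq_mem_of_cons_rel hI'
    rw [shold_update (hf _ hm')]
    exact h2 I' hm'

end BoxEx
section Closed

lemma clusterPt_le_of_eventually {X : Type*} [TopologicalSpace X] {F : Filter X} {x : X}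
    (hx : ClusterPt x F) {G : X → ℝ} (hG : Continuous G) {c₀ : ℝ}
    (hev : ∀ m : ℝ, c₀ < m → {e | G e ≤ m} ∈ F) : G x ≤ c₀ := by
  by_contra hc
  push_neg at hc
  set m := (c₀ + G x) / 2 with hm
  have hm1 : c₀ < m := by rw [hm]; linarith
  have hm2 : m < G x := by rw [hm]; linarith
  have hU : G ⁻¹' Set.Ioi m ∈ nhds x := (isOpen_Ioi.preimage hG).mem_nhds hm2
  have hV : {e | G e ≤ m} ∈ F := hev m hm1
  have hne : (G ⁻¹' Set.Ioi m ∩ {e | G e ≤ m}).Nonempty := by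
    have : ClusterPt x F := hx
    rw [ClusterPt] at this
    exact @Filter.nonempty_of_mem _ _ this _
      (Filter.inter_mem (Filter.mem_inf_of_left hU) (Filter.mem_inf_of_right hV))
  obtain ⟨z, hz1, hz2⟩ := hne
  have hz1' : m < G z := hz1
  have hz2' : G z ≤ m := hz2
  linarith

lemma good_not_closed {B : Branch} (hg : Good B) : ¬ B.IsClosed := by
  obtain ⟨M, hser, δ, hδ, H⟩ := hg
  intro hcl
  apply hcl
  classical
  -- the family of valuations
  set g : ℝ → (LabForm → ℝ) :=
    fun ε => if hε : 0 < ε then sval M (H ε hε).choose else fun _ => 0 with hgdef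
  have hgspec : ∀ (ε : ℝ) (hε : 0 < ε), ∀ I : Ineq, TNode.ineq I ∈ B →
      msum (g ε) I.rhs ≤ msum (g ε) I.lhs + slack I δ ε := by
    intro ε hε I hI
    have := (H ε hε).choose_spec.2 I hI
    simpa [hgdef, dif_pos hε, SHolds] using this
  set l : Filter ℝ := nhdsWithin 0 (Set.Ioi 0) with hl
  set F : Filter (LabForm → ℝ) := Filter.map g l with hF
  haveI : l.NeBot := by rw [hl]; infer_instance
  haveI : F.NeBot := Filter.map_neBot
  -- compactness
  have hcomp : IsCompact (Set.univ.pi fun f : LabForm =>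
      Set.Icc (-(bnd M.r f.1)) (bnd M.r f.1)) :=
    isCompact_univ_pi fun f => isCompact_Icc
  have hle : F ≤ Filter.principal (Set.univ.pi fun f : LabForm =>
      Set.Icc (-(bnd M.r f.1)) (bnd M.r f.1)) := by
    rw [Filter.le_principal_iff, hF, Filter.mem_map]
    apply Filter.univ_mem'
    intro ε
    simp only [Set.mem_preimage, Set.mem_pi, Set.mem_univ, forall_true_left]
    intro f
    by_cases hε : 0 < ε
    · simpa [hgdef, dif_pos hε, sval] using val_bounds M f.1 ((H ε hε).choose f.2)
    · have h0 := bnd_nonneg M.hr f.1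
      simp only [hgdef, dif_neg hε]
      exact ⟨by linarith, h0⟩
  obtain ⟨e, -, he⟩ := hcomp.exists_clusterPt hle
  -- the limit valuation satisfies all inequations on the branch
  refine ⟨e, fun I hI _ => ?_⟩
  have hG : Continuous fun e' : LabForm → ℝ => msum e' I.rhs - msum e' I.lhs :=
    (continuous_msum _).sub (continuous_msum _)
  unfold Ineq.Holds
  by_cases hs : I.strict
  · rw [if_pos hs]
    have key : msum e I.rhs - msum e I.lhs ≤ -δ := by
      refine clusterPt_le_of_eventually he hG ?_
      intro m hm
      rw [hF, Filter.mem_map]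
      refine Filter.mem_of_superset self_mem_nhdsWithin ?_
      intro ε hε
      have := hgspec ε hε I hI
      simp only [slack, if_pos hs] at this
      simp only [Set.mem_preimage, Set.mem_setOf_eq]
      linarith
    linarith
  · rw [if_neg hs]
    have key : msum e I.rhs - msum e I.lhs ≤ 0 := by
      refine clusterPt_le_of_eventually he hG ?_
      intro m hm
      rw [hF, Filter.mem_map]
      refine Filter.mem_of_superset (Ioo_mem_nhdsGT_of_mem ⟨le_refl (0:ℝ), hm⟩) ?_
      rintro ε ⟨hε1, hε2⟩
      have := hgspec ε hε1 I hI
      simp only [slack, if_neg hs] at this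
      simp only [Set.mem_preimage, Set.mem_setOf_eq]
      linarith
    linarith

end Closed
section Main

lemma not_good_of_closable {B : Branch} (h : Closable B) : ¬ Good B := by
  induction h with
  | closed h => exact fun hg => good_not_closed hg h
  | @zeroL B s Γ Δ i hJ _ ih =>
    refine fun hg => ih (good_step1 (J := ⟨s, Γ + {(.zero, i)}, Δ⟩) rfl hJ (fun M w c h => ?_) hg)
    simp only [SHolds, msum_add, msum_singleton, sval, KAModel.val] at h ⊢
    linarith
  | @zeroR B s Γ Δ i hJ _ ih =>
    refine fun hg => ih (good_step1 (J := ⟨s, Γ, {(FormA.zero, i)} + Δ⟩) rfl hJ (fun M w c h => ?_) hg)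
    simp only [SHolds, msum_add, msum_singleton, sval, KAModel.val] at h ⊢
    linarith
  | @conjL B s Γ Δ i φ ψ hJ _ ih =>
    refine fun hg => ih (good_step1 (J := ⟨s, Γ + {(.conj φ ψ, i)}, Δ⟩) rfl hJ (fun M w c h => ?_) hg)
    simp only [SHolds, msum_add, msum_singleton, msum_pair, sval, KAModel.val] at h ⊢
    linarith
  | @conjR B s Γ Δ i φ ψ hJ _ ih =>
    refine fun hg => ih (good_step1 (J := ⟨s, Γ, {(FormA.conj φ ψ, i)} + Δ⟩) rfl hJ (fun M w c h => ?_) hg)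
    simp only [SHolds, msum_add, msum_singleton, msum_pair, sval, KAModel.val] at h ⊢
    linarith
  | @impL B s Γ Δ i φ ψ hJ _ ih =>
    refine fun hg => ih (good_step1 (J := ⟨s, Γ + {(.imp φ ψ, i)}, Δ⟩) rfl hJ (fun M w c h => ?_) hg)
    simp only [SHolds, msum_add, msum_singleton, sval, KAModel.val] at h ⊢
    linarith
  | @impR B s Γ Δ i φ ψ hJ _ ih =>
    refine fun hg => ih (good_step1 (J := ⟨s, Γ, {(FormA.imp φ ψ, i)} + Δ⟩) rfl hJ (fun M w c h => ?_) hg)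
    simp only [SHolds, msum_add, msum_singleton, sval, KAModel.val] at h ⊢
    linarith
  | @andL B s Γ Δ i φ ψ hJ _ ih =>
    refine fun hg => ih (good_step2 (J := ⟨s, Γ + {(.and φ ψ, i)}, Δ⟩) rfl rfl hJ (fun M w c h => ?_) (fun M w c h => ?_) hg)
    · simp only [SHolds, msum_add, msum_singleton, sval, KAModel.val] at h ⊢
      have := min_le_left (M.val φ (w i)) (M.val ψ (w i))
      linarith
    · simp only [SHolds, msum_add, msum_singleton, sval, KAModel.val] at h ⊢
      have := min_le_right (M.val φ (w i)) (M.val ψ (w i))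
      linarith
  | @orR B s Γ Δ i φ ψ hJ _ ih =>
    refine fun hg => ih (good_step2 (J := ⟨s, Γ, {(FormA.or φ ψ, i)} + Δ⟩) rfl rfl hJ (fun M w c h => ?_) (fun M w c h => ?_) hg)
    · simp only [SHolds, msum_add, msum_singleton, sval, KAModel.val] at h ⊢
      have := le_max_left (M.val φ (w i)) (M.val ψ (w i))
      linarith
    · simp only [SHolds, msum_add, msum_singleton, sval, KAModel.val] at h ⊢
      have := le_max_right (M.val φ (w i)) (M.val ψ (w i))
      linarith
  | @orL B s Γ Δ i φ ψ hJ _ _ ih1 ih2 =>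
    intro hg
    have := good_branch (J := ⟨s, Γ + {(.or φ ψ, i)}, Δ⟩)
      (I1 := ⟨s, Γ + {(φ, i)}, Δ⟩) (I2 := ⟨s, Γ + {(ψ, i)}, Δ⟩) rfl rfl hJ
      (fun M w c h => ?_) hg
    · rcases this with h | h
      exacts [ih1 h, ih2 h]
    · simp only [SHolds, msum_add, msum_singleton, sval, KAModel.val] at h ⊢
      rcases max_choice (M.val φ (w i)) (M.val ψ (w i)) with h' | h' <;>
        rw [h'] at h <;> [left; right] <;> linarith
  | @andR B s Γ Δ i φ ψ hJ _ _ ih1 ih2 =>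
    intro hg
    have := good_branch (J := ⟨s, Γ, {(FormA.and φ ψ, i)} + Δ⟩)
      (I1 := ⟨s, Γ, {(φ, i)} + Δ⟩) (I2 := ⟨s, Γ, {(ψ, i)} + Δ⟩) rfl rfl hJ
      (fun M w c h => ?_) hg
    · rcases this with h | h
      exacts [ih1 h, ih2 h]
    · simp only [SHolds, msum_add, msum_singleton, sval, KAModel.val] at h ⊢
      rcases min_choice (M.val φ (w i)) (M.val ψ (w i)) with h' | h' <;>
        rw [h'] at h <;> [left; right] <;> linarith
  | @boxL B s Γ Δ i j φ hrel hJ _ ih =>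
    exact fun hg => ih (good_boxL hrel hg)
  | @boxR B s Γ Δ i φ j hJ hf _ ih =>
    exact fun hg => ih (good_boxR hJ hf hg)
  | @ex B i k j hrel hf _ ih =>
    exact fun hg => ih (good_ex hrel hf hg)

end Main

/-- Soundness of the labelled tableau calculus: if an ℒ_A□-formula φ
is LK(A)-derivable, then φ is K(A)-valid. -/
theorem stmt_2 (φ : FormA) : LKDerivable φ → KAValid φ := by
  intro hder M x
  by_contra hlt
  push_neg at hlt
  apply not_good_of_closable hder
  obtain ⟨y, hy⟩ := serialize_serial M (some x)
  refine ⟨serialize M, serialize_serial M, -(M.val φ x), by linarith, fun ε hε => ?_⟩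
  refine ⟨fun n => if n = 1 then some x else y, ?_, ?_⟩
  · intro i j h
    rcases List.mem_cons.1 h with h | h
    · exact absurd h (by simp)
    rcases List.mem_cons.1 h with h | h
    · obtain ⟨rfl, rfl⟩ : i = 1 ∧ j = 2 := by constructor <;> injection h
      simpa using hy
    · simp at h
  · intro I hI
    rcases List.mem_cons.1 hI with h | h
    · obtain rfl : I = ⟨true, 0, {(φ, 1)}⟩ := by simpa using h
      show SHolds _ _ (slack _ _ _) _
      have hsl : slack ⟨true, 0, {(φ, 1)}⟩ (-(M.val φ x)) ε = -(-(M.val φ x)) := rfl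
      rw [hsl]
      unfold SHolds
      simp only [msum_singleton, sval]
      have h0 : msum (sval (serialize M) fun n => if n = 1 then some x else y) 0 = 0 := rfl
      rw [h0]
      show (serialize M).val φ (if (1:ℕ) = 1 then some x else y) ≤ _
      refine le_trans (le_of_eq (serialize_val_some M φ x)) ?_
      linarith
    · simp at h
end

section
/- The seriality axiom □p → ◇p, i.e., the ℒ_A□-formula □p → ((□(p → 0̄)) → 0̄), is K(A)-valid, where p is a propositional variable. -/
/-- The seriality axiom `□p → ◇p`, i.e. `□p → ((□(p → 0̄)) → 0̄)`,
is K(A)-valid. -/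
theorem stmt_19 (p : ℕ) :
    KAValid (.imp (.box (.var p)) (.imp (.box (.imp (.var p) .zero)) .zero)) := by
  intro M x
  simp only [KAModel.val]
  set S : Set ℝ := {v : ℝ | ∃ y, M.R x y ∧ M.V p y = v} with hS
  set S' : Set ℝ := {v : ℝ | ∃ y, M.R x y ∧ 0 - M.V p y = v} with hS'
  by_cases h : ∃ y, M.R x y
  · obtain ⟨y, hy⟩ := h
    have hb : BddBelow S := by
      refine ⟨-M.r, fun v hv => ?_⟩
      obtain ⟨z, _, hz⟩ := hv
      simpa [← hz] using (M.hV p z).1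
    have hb' : BddBelow S' := by
      refine ⟨-M.r, fun v hv => ?_⟩
      obtain ⟨z, _, hz⟩ := hv
      have := (M.hV p z).2
      linarith
    have h1 : sInf S ≤ M.V p y := csInf_le hb ⟨y, hy, rfl⟩
    have h2 : sInf S' ≤ 0 - M.V p y := csInf_le hb' ⟨y, hy, rfl⟩
    linarith
  · have hSe : S = ∅ := by
      ext v; simp only [hS, Set.mem_setOf_eq, Set.mem_empty_iff_false, iff_false]
      rintro ⟨y, hy, -⟩; exact h ⟨y, hy⟩
    have hSe' : S' = ∅ := by
      ext v; simp only [hS', Set.mem_setOf_eq, Set.mem_empty_iff_false, iff_false]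
      rintro ⟨y, hy, -⟩; exact h ⟨y, hy⟩
    rw [hSe, hSe', Real.sInf_empty]
    simp
end
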